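/- If R_{X₁X₂}(D₁,D₂) = R_{X₁}(D₁) + R_{X₂}(D₂) − I(X₁;X₂), and W satisfies the constraint R_{X₁|W}(D₁) + R_{X₂|W}(D₂) + I(X₁,X₂;W) = R_{X₁X₂}(D₁,D₂), then I(X₁;X₂|W) = 0 (i.e., X₁ − W − X₂ is a Markov chain), and hence I(X₁,X₂;W) ≥ C(X₁,X₂). -/

import Mathlib

open scoped BigOperators

/-- Shannon entropy of a pmf on a finite alphabet (natural log). -/
noncomputable def ent {A : Type*} [Fintype A] (p : A → ℝ) : ℝ :=
  -∑ a, p a * Real.log (p a)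

/-- `p` is a probability mass function. -/
def IsPMF {A : Type*} [Fintype A] (p : A → ℝ) : Prop :=
  (∀ a, 0 ≤ p a) ∧ ∑ a, p a = 1

section RD

variable {𝒳 𝒴 𝒲 𝒳₁ 𝒳₂ 𝒴₁ 𝒴₂ : Type}
  [Fintype 𝒳] [Fintype 𝒴] [Fintype 𝒲] [Fintype 𝒳₁] [Fintype 𝒳₂]
  [Fintype 𝒴₁] [Fintype 𝒴₂]

/-- `I(X₁;X₂)` from a pair pmf. -/
noncomputable def miPair (p : 𝒳₁ × 𝒳₂ → ℝ) : ℝ :=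
  ent (fun x₁ => ∑ x₂, p (x₁, x₂)) + ent (fun x₂ => ∑ x₁, p (x₁, x₂)) - ent p

/-- `I(X₁,X₂;W)` from a triple pmf. -/
noncomputable def miXXW (q : 𝒳₁ × 𝒳₂ × 𝒲 → ℝ) : ℝ :=
  ent (fun u : 𝒳₁ × 𝒳₂ => ∑ w, q (u.1, u.2, w))
    + ent (fun w => ∑ x₁, ∑ x₂, q (x₁, x₂, w)) - ent q

/-- `I(X₁;X₂|W)` from a triple pmf. -/
noncomputable def cmiXXW (q : 𝒳₁ × 𝒳₂ × 𝒲 → ℝ) : ℝ :=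
  ent (fun u : 𝒳₁ × 𝒲 => ∑ x₂, q (u.1, x₂, u.2))
    + ent (fun u : 𝒳₂ × 𝒲 => ∑ x₁, q (x₁, u.1, u.2))
    - ent q - ent (fun w => ∑ x₁, ∑ x₂, q (x₁, x₂, w))

/-- The (marginal) rate distortion function `R_X(D)`. -/
noncomputable def RDmarg (p : 𝒳 → ℝ) (d : 𝒳 → 𝒴 → ℝ) (D : ℝ) : ℝ :=
  sInf {r : ℝ | ∃ q : 𝒳 × 𝒴 → ℝ, IsPMF q ∧
    (∀ x, (∑ y, q (x, y)) = p x) ∧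
    (∑ z, q z * d z.1 z.2) ≤ D ∧
    r = ent (fun x => ∑ y, q (x, y)) + ent (fun y => ∑ x, q (x, y)) - ent q}

/-- The joint rate distortion function `R_{X₁X₂}(D₁,D₂)`. -/
noncomputable def RDjoint (p : 𝒳₁ × 𝒳₂ → ℝ)
    (d₁ : 𝒳₁ → 𝒴₁ → ℝ) (d₂ : 𝒳₂ → 𝒴₂ → ℝ) (D₁ D₂ : ℝ) : ℝ :=
  sInf {r : ℝ | ∃ q : (𝒳₁ × 𝒳₂) × 𝒴₁ × 𝒴₂ → ℝ, IsPMF q ∧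
    (∀ x : 𝒳₁ × 𝒳₂, (∑ y₁, ∑ y₂, q (x, y₁, y₂)) = p x) ∧
    (∑ z, q z * d₁ z.1.1 z.2.1) ≤ D₁ ∧
    (∑ z, q z * d₂ z.1.2 z.2.2) ≤ D₂ ∧
    r = ent (fun x : 𝒳₁ × 𝒳₂ => ∑ y₁, ∑ y₂, q (x, y₁, y₂))
        + ent (fun y : 𝒴₁ × 𝒴₂ => ∑ x : 𝒳₁ × 𝒳₂, q (x, y.1, y.2)) - ent q}

/-- The conditional rate distortion function `R_{X|W}(D)`, for a given joint
pmf `pw` of `(X, W)`. -/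
noncomputable def RDcond (pw : 𝒳 × 𝒲 → ℝ) (d : 𝒳 → 𝒴 → ℝ) (D : ℝ) : ℝ :=
  sInf {r : ℝ | ∃ q : 𝒳 × 𝒲 × 𝒴 → ℝ, IsPMF q ∧
    (∀ x w, (∑ y, q (x, w, y)) = pw (x, w)) ∧
    (∑ z, q z * d z.1 z.2.2) ≤ D ∧
    -- r = I(X;Y|W) = H(X,W) + H(W,Y) − H(X,W,Y) − H(W)
    r = ent (fun u : 𝒳 × 𝒲 => ∑ y, q (u.1, u.2, y))
        + ent (fun v : 𝒲 × 𝒴 => ∑ x, q (x, v.1, v.2))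
        - ent q - ent (fun w => ∑ x, ∑ y, q (x, w, y))}

/-- The joint conditional rate distortion function `R_{X₁X₂|W}(D₁,D₂)`. -/
noncomputable def RDcond2 (pw : (𝒳₁ × 𝒳₂) × 𝒲 → ℝ)
    (d₁ : 𝒳₁ → 𝒴₁ → ℝ) (d₂ : 𝒳₂ → 𝒴₂ → ℝ) (D₁ D₂ : ℝ) : ℝ :=
  sInf {r : ℝ | ∃ q : (𝒳₁ × 𝒳₂) × 𝒲 × (𝒴₁ × 𝒴₂) → ℝ, IsPMF q ∧
    (∀ x w, (∑ y : 𝒴₁ × 𝒴₂, q (x, w, y)) = pw (x, w)) ∧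
    (∑ z, q z * d₁ z.1.1 z.2.2.1) ≤ D₁ ∧
    (∑ z, q z * d₂ z.1.2 z.2.2.2) ≤ D₂ ∧
    r = ent (fun u : (𝒳₁ × 𝒳₂) × 𝒲 => ∑ y : 𝒴₁ × 𝒴₂, q (u.1, u.2, y))
        + ent (fun v : 𝒲 × 𝒴₁ × 𝒴₂ => ∑ x : 𝒳₁ × 𝒳₂, q (x, v.1, v.2))
        - ent q - ent (fun w => ∑ x : 𝒳₁ × 𝒳₂, ∑ y : 𝒴₁ × 𝒴₂, q (x, w, y))}

/-- Wyner's common information of a pair. -/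
noncomputable def wynerC (p : 𝒳₁ × 𝒳₂ → ℝ) : ℝ :=
  sInf {r : ℝ | ∃ n : ℕ, ∃ q : 𝒳₁ × 𝒳₂ × Fin n → ℝ, IsPMF q ∧
    (∀ x₁ x₂, (∑ w, q (x₁, x₂, w)) = p (x₁, x₂)) ∧
    (∀ x₁ x₂ w, q (x₁, x₂, w) * (∑ a, ∑ b, q (a, b, w))
        = (∑ b, q (x₁, b, w)) * (∑ a, q (a, x₂, w))) ∧
    r = miXXW q}

/-- The minimum common message rate `C₃(D₁,D₂)` of the Gray–Wyner network at
sum rate `R_{X₁X₂}(D₁,D₂)` (the characterization of Theorem 3):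
`inf I(X₁,X₂;W)` subject to
`R_{X₁|W}(D₁) + R_{X₂|W}(D₂) + I(X₁,X₂;W) = R_{X₁X₂}(D₁,D₂)`. -/
noncomputable def C3 (p : 𝒳₁ × 𝒳₂ → ℝ)
    (d₁ : 𝒳₁ → 𝒴₁ → ℝ) (d₂ : 𝒳₂ → 𝒴₂ → ℝ) (D₁ D₂ : ℝ) : ℝ :=
  sInf {r : ℝ | ∃ n : ℕ, ∃ q : 𝒳₁ × 𝒳₂ × Fin n → ℝ, IsPMF q ∧
    (∀ x₁ x₂, (∑ w, q (x₁, x₂, w)) = p (x₁, x₂)) ∧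
    RDcond (fun u : 𝒳₁ × Fin n => ∑ x₂, q (u.1, x₂, u.2)) d₁ D₁
      + RDcond (fun u : 𝒳₂ × Fin n => ∑ x₁, q (x₁, u.1, u.2)) d₂ D₂
      + miXXW q = RDjoint p d₁ d₂ D₁ D₂ ∧
    r = miXXW q}

end RD


section Gibbs

variable {A B C : Type} [Fintype A] [Fintype B] [Fintype C]

lemma sum_rot {α β γ : Type*} [Fintype α] [Fintype β] [Fintype γ] (g : α → β → γ → ℝ) :
    ∑ a, ∑ b, ∑ c, g a b c = ∑ c, ∑ a, ∑ b, g a b c :=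
  calc ∑ a, ∑ b, ∑ c, g a b c
      = ∑ a, ∑ c, ∑ b, g a b c := Finset.sum_congr rfl fun _ _ => Finset.sum_comm
    _ = ∑ c, ∑ a, ∑ b, g a b c := Finset.sum_comm

/-- the key Gibbs quantity for a triple. -/
lemma gibbs_main (t : A × B × C → ℝ) (h0 : ∀ z, 0 ≤ t z) (h1 : ∑ z, t z = 1) :
    (0 ≤ ent (fun u : A × C => ∑ b, t (u.1, b, u.2))
        + ent (fun u : B × C => ∑ a, t (a, u.1, u.2))
        - ent t - ent (fun c => ∑ a, ∑ b, t (a, b, c))) ∧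
    (ent (fun u : A × C => ∑ b, t (u.1, b, u.2))
        + ent (fun u : B × C => ∑ a, t (a, u.1, u.2))
        - ent t - ent (fun c => ∑ a, ∑ b, t (a, b, c)) = 0 →
      ∀ a b c, t (a, b, c) * (∑ a', ∑ b', t (a', b', c))
        = (∑ b', t (a, b', c)) * (∑ a', t (a', b, c))) := by
  classical
  set tAC : A × C → ℝ := fun u => ∑ b, t (u.1, b, u.2) with htAC
  set tBC : B × C → ℝ := fun u => ∑ a, t (a, u.1, u.2) with htBC
  set tC : C → ℝ := fun c => ∑ a, ∑ b, t (a, b, c) with htC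
  have hAC0 : ∀ u, 0 ≤ tAC u := fun u => Finset.sum_nonneg fun b _ => h0 _
  have hBC0 : ∀ u, 0 ≤ tBC u := fun u => Finset.sum_nonneg fun a _ => h0 _
  have hC0 : ∀ c, 0 ≤ tC c := fun c =>
    Finset.sum_nonneg fun a _ => Finset.sum_nonneg fun b _ => h0 _
  -- pointwise bounds relating entries to marginals
  have hle_AC : ∀ a b c, t (a, b, c) ≤ tAC (a, c) := by
    intro a b c
    exact Finset.single_le_sum (fun b' _ => h0 (a, b', c)) (Finset.mem_univ b)
  have hle_BC : ∀ a b c, t (a, b, c) ≤ tBC (b, c) := by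
    intro a b c
    exact Finset.single_le_sum (fun a' _ => h0 (a', b, c)) (Finset.mem_univ a)
  have hACle_C : ∀ a c, tAC (a, c) ≤ tC c := by
    intro a c
    exact Finset.single_le_sum (f := fun a' => ∑ b, t (a', b, c))
      (fun a' _ => Finset.sum_nonneg fun b _ => h0 _) (Finset.mem_univ a)
  set s : A × B × C → ℝ :=
    fun z => tAC (z.1, z.2.2) * tBC (z.2.1, z.2.2) / tC z.2.2 with hs
  set f : A × B × C → ℝ := fun z => t z * (Real.log (t z) + Real.log (tC z.2.2)
      - Real.log (tAC (z.1, z.2.2)) - Real.log (tBC (z.2.1, z.2.2))) with hf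
  have hs0 : ∀ z, 0 ≤ s z := fun z =>
    div_nonneg (mul_nonneg (hAC0 _) (hBC0 _)) (hC0 _)
  -- step (i) : sum of f equals the Gibbs quantity
  have hT2 : ∑ z : A × B × C, t z * Real.log (tC z.2.2)
      = ∑ c, tC c * Real.log (tC c) := by
    rw [Fintype.sum_prod_type]
    simp only [Fintype.sum_prod_type]
    rw [sum_rot (fun a b c => t (a, b, c) * Real.log (tC c))]
    refine Finset.sum_congr rfl fun c _ => ?_
    simp only [← Finset.sum_mul, htC]
  have hT3 : ∑ z : A × B × C, t z * Real.log (tAC (z.1, z.2.2))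
      = ∑ u : A × C, tAC u * Real.log (tAC u) := by
    rw [Fintype.sum_prod_type, Fintype.sum_prod_type]
    simp only [Fintype.sum_prod_type]
    refine Finset.sum_congr rfl fun a _ => ?_
    rw [Finset.sum_comm]
    refine Finset.sum_congr rfl fun c _ => ?_
    simp only [← Finset.sum_mul, htAC]
  have hT4 : ∑ z : A × B × C, t z * Real.log (tBC (z.2.1, z.2.2))
      = ∑ u : B × C, tBC u * Real.log (tBC u) := by
    rw [Fintype.sum_prod_type, Fintype.sum_prod_type]
    simp only [Fintype.sum_prod_type]
    rw [Finset.sum_comm]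
    refine Finset.sum_congr rfl fun b _ => ?_
    rw [Finset.sum_comm]
    refine Finset.sum_congr rfl fun c _ => ?_
    simp only [← Finset.sum_mul, htBC]
  have hsumf : ∑ z, f z
      = ent tAC + ent tBC - ent t - ent tC := by
    have : ∑ z, f z = (∑ z, t z * Real.log (t z))
        + (∑ z : A × B × C, t z * Real.log (tC z.2.2))
        - (∑ z : A × B × C, t z * Real.log (tAC (z.1, z.2.2)))
        - (∑ z : A × B × C, t z * Real.log (tBC (z.2.1, z.2.2))) := by
      simp only [hf, mul_add, mul_sub, Finset.sum_sub_distrib, Finset.sum_add_distrib]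
    rw [this, hT2, hT3, hT4]
    simp only [ent]
    ring
  -- step (ii) : pointwise bound
  have hfz : ∀ z, t z - s z ≤ f z := by
    intro z
    rcases eq_or_lt_of_le (h0 z) with h | h
    · simp only [hf, ← h, zero_mul, sub_nonpos, zero_sub, neg_nonpos]
      exact (hs0 z).trans (by simp [← h])
    · have htACpos : 0 < tAC (z.1, z.2.2) :=
        lt_of_lt_of_le h (hle_AC z.1 z.2.1 z.2.2)
      have htBCpos : 0 < tBC (z.2.1, z.2.2) :=
        lt_of_lt_of_le h (hle_BC z.1 z.2.1 z.2.2)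
      have htCpos : 0 < tC z.2.2 := lt_of_lt_of_le htACpos (hACle_C z.1 z.2.2)
      have hspos : 0 < s z := div_pos (mul_pos htACpos htBCpos) htCpos
      have hratio : 0 < s z / t z := div_pos hspos h
      have hlog : Real.log (s z / t z) ≤ s z / t z - 1 :=
        Real.log_le_sub_one_of_pos hratio
      have hfz' : f z = -(t z * Real.log (s z / t z)) := by
        rw [Real.log_div (ne_of_gt hspos) (ne_of_gt h),
          Real.log_div (ne_of_gt (mul_pos htACpos htBCpos)) (ne_of_gt htCpos),
          Real.log_mul (ne_of_gt htACpos) (ne_of_gt htBCpos)]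
        simp only [hf]; ring
      rw [hfz']
      have := mul_le_mul_of_nonneg_left hlog (le_of_lt h)
      nlinarith [this, mul_div_cancel₀ (s z) (ne_of_gt h)]
  -- total mass of t marginals
  have htCsum : ∑ c, tC c = 1 := by
    rw [← h1, Fintype.sum_prod_type]
    simp only [Fintype.sum_prod_type]
    exact (sum_rot fun a b c => t (a, b, c)).symm
  -- step (iii) : per-slice mass of s
  have hsum_ab : ∀ c, tC c ≠ 0 → (∑ a, ∑ b, s (a, b, c)) = tC c := by
    intro c hc
    have e1 : ∑ a, ∑ b, tAC (a, c) * tBC (b, c) = tC c * tC c := by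
      simp only [← Finset.mul_sum]
      rw [← Finset.sum_mul]
      have e2 : ∑ b, tBC (b, c) = tC c := by
        rw [htC]; exact Finset.sum_comm
      have e3 : ∑ a, tAC (a, c) = tC c := rfl
      rw [e2, e3]
    have : ∀ a b, s (a, b, c) = tAC (a, c) * tBC (b, c) * (tC c)⁻¹ := by
      intro a b; simp only [hs, div_eq_mul_inv]
    simp only [this, ← Finset.sum_mul]
    rw [e1]
    field_simp
  have hslice : ∀ c, (∑ a, ∑ b, s (a, b, c)) ≤ tC c := by
    intro c
    by_cases hc : tC c = 0
    · have hz : ∀ a, tAC (a, c) = 0 := fun a =>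
        le_antisymm (hc ▸ hACle_C a c) (hAC0 _)
      simp only [hs, hz, zero_mul, zero_div]
      simp [hc]
    · exact le_of_eq (hsum_ab c hc)
  have hs_split : ∑ z, s z = ∑ c, ∑ a, ∑ b, s (a, b, c) := by
    rw [Fintype.sum_prod_type]
    simp only [Fintype.sum_prod_type]
    exact sum_rot fun a b c => s (a, b, c)
  have hsum_s : ∑ z, s z ≤ 1 := by
    rw [hs_split, ← htCsum]
    exact Finset.sum_le_sum fun c _ => hslice c
  -- the inequality
  have hineq : 0 ≤ ent tAC + ent tBC - ent t - ent tC := by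
    rw [← hsumf]
    calc (0 : ℝ) ≤ 1 - ∑ z, s z := by linarith
      _ = ∑ z, t z - ∑ z, s z := by rw [h1]
      _ = ∑ z, (t z - s z) := (Finset.sum_sub_distrib _ _).symm
      _ ≤ ∑ z, f z := Finset.sum_le_sum fun z _ => hfz z
  refine ⟨hineq, ?_⟩
  -- the equality case
  intro heq a b c
  have hfsum0 : ∑ z, f z = 0 := by rw [hsumf, heq]
  have hsum_s_ge : 1 ≤ ∑ z, s z := by
    have : ∑ z, (t z - s z) ≤ 0 := by
      calc ∑ z, (t z - s z) ≤ ∑ z, f z := Finset.sum_le_sum fun z _ => hfz z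
        _ = 0 := hfsum0
    rw [Finset.sum_sub_distrib, h1] at this
    linarith
  have hsum_s_eq : ∑ z, s z = 1 := le_antisymm hsum_s hsum_s_ge
  -- every pointwise inequality is tight
  have hfz_eq : ∀ z, f z = t z - s z := by
    have h0' : ∑ z, (f z - (t z - s z)) = 0 := by
      rw [Finset.sum_sub_distrib, Finset.sum_sub_distrib, hfsum0, h1, hsum_s_eq]
      ring
    intro z
    have := (Finset.sum_eq_zero_iff_of_nonneg
      (fun z _ => sub_nonneg.mpr (hfz z))).mp h0' z (Finset.mem_univ z)
    linarith
  -- now extract the factorization at (a, b, c)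
  by_cases hc : tC c = 0
  · have hz : ∀ a, tAC (a, c) = 0 := fun a =>
      le_antisymm (hc ▸ hACle_C a c) (hAC0 _)
    have ht0 : t (a, b, c) = 0 :=
      le_antisymm ((hle_AC a b c).trans (le_of_eq (hz a))) (h0 _)
    have : (∑ a', ∑ b', t (a', b', c)) = tC c := rfl
    rw [this, hc, ht0]
    have : (∑ b', t (a, b', c)) = tAC (a, c) := rfl
    rw [this, hz a]
    ring
  · -- tC c > 0 : show t z = s z at z = (a,b,c)
    have hts : t (a, b, c) = s (a, b, c) := by
      rcases eq_or_lt_of_le (h0 (a, b, c)) with h | h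
      · -- t = 0 : then f = 0 so s = 0
        have := hfz_eq (a, b, c)
        simp only [hf, ← h, zero_mul] at this
        linarith
      · -- t > 0 : strict log inequality unless ratio is 1
        set z : A × B × C := (a, b, c) with hzdef
        have htACpos : 0 < tAC (a, c) := lt_of_lt_of_le h (hle_AC a b c)
        have htBCpos : 0 < tBC (b, c) := lt_of_lt_of_le h (hle_BC a b c)
        have htCpos : 0 < tC c := lt_of_lt_of_le htACpos (hACle_C a c)
        have hspos : 0 < s z := div_pos (mul_pos htACpos htBCpos) htCpos
        have hfz' : f z = -(t z * Real.log (s z / t z)) := by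
          rw [Real.log_div (ne_of_gt hspos) (ne_of_gt h),
            Real.log_div (ne_of_gt (mul_pos htACpos htBCpos)) (ne_of_gt htCpos),
            Real.log_mul (ne_of_gt htACpos) (ne_of_gt htBCpos)]
          simp only [hf]; ring
        by_contra hne
        have hr1 : s z / t z ≠ 1 := by
          intro h1'
          exact hne ((div_eq_one_iff_eq (ne_of_gt h)).mp h1').symm
        have hstrict : Real.log (s z / t z) < s z / t z - 1 :=
          Real.log_lt_sub_one_of_pos (div_pos hspos h) hr1
        have := hfz_eq z
        rw [hfz'] at this
        have hmul := (mul_lt_mul_of_pos_left hstrict h)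
        rw [mul_sub, mul_one, mul_div_cancel₀ _ (ne_of_gt h)] at hmul
        linarith
    -- convert t = s into the product identity
    have e1 : (∑ a', ∑ b', t (a', b', c)) = tC c := rfl
    have e2 : (∑ b', t (a, b', c)) = tAC (a, c) := rfl
    have e3 : (∑ a', t (a', b, c)) = tBC (b, c) := rfl
    rw [e1, e2, e3, hts]
    simp only [hs]
    field_simp

end Gibbs

section Pair

variable {A B : Type} [Fintype A] [Fintype B]

lemma ent_fst_punit (f : A × PUnit → ℝ) :
    ent f = ent (fun a => f (a, PUnit.unit)) := by
  unfold ent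
  rw [Fintype.sum_prod_type]
  simp

lemma gibbs_pair (t : A × B → ℝ) (h0 : ∀ z, 0 ≤ t z) (h1 : ∑ z, t z = 1) :
    0 ≤ ent (fun a => ∑ b, t (a, b)) + ent (fun b => ∑ a, t (a, b)) - ent t := by
  have h1' : ∑ z : A × B × PUnit, t (z.1, z.2.1) = 1 := by
    rw [← h1, Fintype.sum_prod_type, Fintype.sum_prod_type]
    simp [Fintype.sum_prod_type]
  have key := (gibbs_main (fun z : A × B × PUnit => t (z.1, z.2.1))
    (fun z => h0 _) h1').1
  have e1 : ent (fun u : A × PUnit => ∑ b, t (u.1, b))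
      = ent (fun a => ∑ b, t (a, b)) := ent_fst_punit _
  have e2 : ent (fun u : B × PUnit => ∑ a, t (a, u.1))
      = ent (fun b => ∑ a, t (a, b)) := ent_fst_punit _
  have e3 : ent (fun z : A × B × PUnit => t (z.1, z.2.1)) = ent t := by
    unfold ent
    rw [Fintype.sum_prod_type, Fintype.sum_prod_type]
    simp [Fintype.sum_prod_type]
  have e4 : ent (fun _ : PUnit => ∑ a, ∑ b, t (a, b)) = 0 := by
    have : ∑ a, ∑ b, t (a, b) = 1 := by rw [← h1, Fintype.sum_prod_type]
    unfold ent
    simp [this]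
  rw [e1, e2, e3, e4] at key
  linarith

end Pair

section LemA

variable {𝒳 𝒲 𝒴 : Type} [Fintype 𝒳] [Fintype 𝒲] [Fintype 𝒴]

lemma nonneg_of_mem_rdmarg {p : 𝒳 → ℝ} {d : 𝒳 → 𝒴 → ℝ} {D r : ℝ}
    (hr : r ∈ {r : ℝ | ∃ q : 𝒳 × 𝒴 → ℝ, IsPMF q ∧
      (∀ x, (∑ y, q (x, y)) = p x) ∧
      (∑ z, q z * d z.1 z.2) ≤ D ∧
      r = ent (fun x => ∑ y, q (x, y)) + ent (fun y => ∑ x, q (x, y)) - ent q}) :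
    0 ≤ r := by
  obtain ⟨q, ⟨hq0, hq1⟩, -, -, hrf⟩ := hr
  rw [hrf]
  exact gibbs_pair q hq0 hq1

lemma rdcond_ge (pw : 𝒳 × 𝒲 → ℝ) (hpw : IsPMF pw) (d : 𝒳 → 𝒴 → ℝ) (D : ℝ) :
    RDmarg (fun x => ∑ w, pw (x, w)) d D
      - (ent (fun x => ∑ w, pw (x, w)) + ent (fun w => ∑ x, pw (x, w)) - ent pw)
      ≤ RDcond pw d D := by
  classical
  obtain ⟨hpw0, hpw1⟩ := hpw
  set p : 𝒳 → ℝ := fun x => ∑ w, pw (x, w) with hp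
  set pW : 𝒲 → ℝ := fun w => ∑ x, pw (x, w) with hpW
  have hp0 : ∀ x, 0 ≤ p x := fun x => Finset.sum_nonneg fun w _ => hpw0 _
  have hIxw : 0 ≤ ent p + ent pW - ent pw := gibbs_pair pw hpw0 hpw1
  set Sc := {r : ℝ | ∃ q : 𝒳 × 𝒲 × 𝒴 → ℝ, IsPMF q ∧
    (∀ x w, (∑ y, q (x, w, y)) = pw (x, w)) ∧
    (∑ z, q z * d z.1 z.2.2) ≤ D ∧
    r = ent (fun u : 𝒳 × 𝒲 => ∑ y, q (u.1, u.2, y))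
        + ent (fun v : 𝒲 × 𝒴 => ∑ x, q (x, v.1, v.2))
        - ent q - ent (fun w => ∑ x, ∑ y, q (x, w, y))} with hSc
  set Sm := {r : ℝ | ∃ q : 𝒳 × 𝒴 → ℝ, IsPMF q ∧
    (∀ x, (∑ y, q (x, y)) = p x) ∧
    (∑ z, q z * d z.1 z.2) ≤ D ∧
    r = ent (fun x => ∑ y, q (x, y)) + ent (fun y => ∑ x, q (x, y)) - ent q} with hSm
  have hSmBdd : BddBelow Sm := ⟨0, fun r hr => nonneg_of_mem_rdmarg hr⟩
  have hRC : RDcond pw d D = sInf Sc := rfl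
  have hRM : RDmarg p d D = sInf Sm := rfl
  rcases Set.eq_empty_or_nonempty Sc with hSce | hScne
  · -- conditional set empty
    rw [hRC, hSce, Real.sInf_empty]
    rcases Set.eq_empty_or_nonempty Sm with hSme | hSmne
    · rw [hRM, hSme, Real.sInf_empty]; linarith
    · -- build a conditional channel from a marginal one : contradiction
      exfalso
      obtain ⟨r, q'', ⟨hq0, hq1⟩, hqm, hqd, -⟩ := hSmne
      have hq''0 : ∀ x, p x = 0 → ∀ y, q'' (x, y) = 0 := by
        intro x hx y
        have := (Finset.sum_eq_zero_iff_of_nonneg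
          (fun y _ => hq0 (x, y))).mp ((hqm x).trans hx) y (Finset.mem_univ y)
        exact this
      have hpw0' : ∀ x, p x = 0 → ∀ w, pw (x, w) = 0 := by
        intro x hx w
        exact (Finset.sum_eq_zero_iff_of_nonneg
          (fun w _ => hpw0 (x, w))).mp hx w (Finset.mem_univ w)
      set q' : 𝒳 × 𝒲 × 𝒴 → ℝ :=
        fun z => pw (z.1, z.2.1) * q'' (z.1, z.2.2) / p z.1 with hq'
      have hq'marg : ∀ x w, (∑ y, q' (x, w, y)) = pw (x, w) := by
        intro x w
        by_cases hx : p x = 0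
        · simp only [hq', hpw0' x hx w, zero_mul, zero_div,
            Finset.sum_const, smul_zero, hpw0' x hx w]
        · simp only [hq']
          rw [← Finset.sum_div, ← Finset.mul_sum, hqm x]
          field_simp
      have hq'0 : ∀ z, 0 ≤ q' z :=
        fun z => div_nonneg (mul_nonneg (hpw0 _) (hq0 _)) (hp0 _)
      have hq'1 : ∑ z, q' z = 1 := by
        rw [Fintype.sum_prod_type]
        simp only [Fintype.sum_prod_type]
        calc ∑ x, ∑ w, ∑ y, q' (x, w, y)
            = ∑ x, ∑ w, pw (x, w) := by
              refine Finset.sum_congr rfl fun x _ => Finset.sum_congr rfl fun w _ => ?_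
              exact hq'marg x w
          _ = 1 := by rw [← hpw1, Fintype.sum_prod_type]
      have hq'd : (∑ z, q' z * d z.1 z.2.2) ≤ D := by
        have key : ∀ x, ∑ w, ∑ y, q' (x, w, y) * d x y
            = ∑ y, q'' (x, y) * d x y := by
          intro x
          by_cases hx : p x = 0
          · simp only [hq', hpw0' x hx, zero_mul, zero_div]
            simp [hq''0 x hx]
          · rw [Finset.sum_comm]
            refine Finset.sum_congr rfl fun y _ => ?_
            simp only [hq']
            rw [← Finset.sum_mul, ← Finset.sum_div, ← Finset.sum_mul]
            rw [show (∑ w, pw (x, w)) = p x from rfl]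
            field_simp
        calc ∑ z, q' z * d z.1 z.2.2
            = ∑ x, ∑ w, ∑ y, q' (x, w, y) * d x y := by
              rw [Fintype.sum_prod_type]
              simp only [Fintype.sum_prod_type]
          _ = ∑ x, ∑ y, q'' (x, y) * d x y :=
              Finset.sum_congr rfl fun x _ => key x
          _ = ∑ z, q'' z * d z.1 z.2 := by
              rw [Fintype.sum_prod_type]
          _ ≤ D := hqd
      exact Set.eq_empty_iff_forall_notMem.mp hSce _
        ⟨q', ⟨hq'0, hq'1⟩, hq'marg, hq'd, rfl⟩
  · -- conditional set nonempty
    rw [hRC]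
    refine le_csInf hScne ?_
    rintro r ⟨q', ⟨hq0, hq1⟩, hqm, hqd, hrf⟩
    set q'' : 𝒳 × 𝒴 → ℝ := fun u => ∑ w, q' (u.1, w, u.2) with hq''
    have hq''0 : ∀ u, 0 ≤ q'' u := fun u => Finset.sum_nonneg fun w _ => hq0 _
    have hq''1 : ∑ u, q'' u = 1 := by
      rw [← hq1, Fintype.sum_prod_type, Fintype.sum_prod_type]
      simp only [Fintype.sum_prod_type]
      exact Finset.sum_congr rfl fun x _ => Finset.sum_comm
    have hq''m : ∀ x, (∑ y, q'' (x, y)) = p x := by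
      intro x
      rw [show (∑ y, q'' (x, y)) = ∑ y, ∑ w, q' (x, w, y) from rfl,
        Finset.sum_comm]
      exact Finset.sum_congr rfl fun w _ => hqm x w
    have hq''d : (∑ z, q'' z * d z.1 z.2) ≤ D := by
      calc ∑ z, q'' z * d z.1 z.2
          = ∑ x, ∑ y, (∑ w, q' (x, w, y)) * d x y := by
            rw [Fintype.sum_prod_type]
        _ = ∑ x, ∑ w, ∑ y, q' (x, w, y) * d x y := by
            refine Finset.sum_congr rfl fun x _ => ?_
            rw [Finset.sum_comm]
            exact Finset.sum_congr rfl fun y _ => Finset.sum_mul _ _ _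
        _ = ∑ z, q' z * d z.1 z.2.2 := by
            rw [Fintype.sum_prod_type]
            simp only [Fintype.sum_prod_type]
        _ ≤ D := hqd
    have hvmem : (ent (fun x => ∑ y, q'' (x, y)) + ent (fun y => ∑ x, q'' (x, y))
        - ent q'') ∈ Sm := ⟨q'', ⟨hq''0, hq''1⟩, hq''m, hq''d, rfl⟩
    have hRMle : RDmarg p d D ≤ ent (fun x => ∑ y, q'' (x, y))
        + ent (fun y => ∑ x, q'' (x, y)) - ent q'' := by
      rw [hRM]; exact csInf_le hSmBdd hvmem
    -- the conditional-MI inequality for q' with grouping (X ; W | Y)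
    have hgibbs := (gibbs_main q' hq0 hq1).1
    -- identify entropy terms
    have eXY : ent (fun u : 𝒳 × 𝒴 => ∑ w, q' (u.1, w, u.2)) = ent q'' := rfl
    have eX : ent (fun x => ∑ y, q'' (x, y)) = ent p := by
      unfold ent
      refine congrArg _ (Finset.sum_congr rfl fun x _ => ?_)
      show (∑ y, q'' (x, y)) * Real.log (∑ y, q'' (x, y)) = p x * Real.log (p x)
      rw [hq''m x]
    have eY : ent (fun c : 𝒴 => ∑ x, ∑ w, q' (x, w, c))
        = ent (fun y => ∑ x, q'' (x, y)) := rfl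
    have eXW : ent (fun u : 𝒳 × 𝒲 => ∑ y, q' (u.1, u.2, y)) = ent pw := by
      unfold ent
      refine congrArg _ (Finset.sum_congr rfl fun u _ => ?_)
      show (∑ y, q' (u.1, u.2, y)) * Real.log (∑ y, q' (u.1, u.2, y)) = pw u * Real.log (pw u)
      rw [hqm u.1 u.2]
    have eW : ent (fun w => ∑ x, ∑ y, q' (x, w, y)) = ent pW := by
      unfold ent
      refine congrArg _ (Finset.sum_congr rfl fun w _ => ?_)
      show (∑ x, ∑ y, q' (x, w, y)) * Real.log (∑ x, ∑ y, q' (x, w, y)) = pW w * Real.log (pW w)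
      rw [show (∑ x, ∑ y, q' (x, w, y)) = pW w from Finset.sum_congr rfl fun x _ => hqm x w]
    rw [hrf, eXW, eW]
    rw [eXY, eY] at hgibbs
    rw [hRM] at hRMle ⊢
    have := hRMle
    rw [eX] at this
    linarith

end LemA

section Final

variable {𝒳₁ 𝒳₂ 𝒲 : Type} [Fintype 𝒳₁] [Fintype 𝒳₂] [Fintype 𝒲]

lemma miXXW_nonneg (q : 𝒳₁ × 𝒳₂ × 𝒲 → ℝ) (h0 : ∀ z, 0 ≤ q z)
    (h1 : ∑ z, q z = 1) : 0 ≤ miXXW q := by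
  set t : (𝒳₁ × 𝒳₂) × 𝒲 → ℝ := fun u => q (u.1.1, u.1.2, u.2) with ht
  have ht1 : ∑ u, t u = 1 := by
    rw [← h1]
    rw [Fintype.sum_prod_type, Fintype.sum_prod_type]
    simp only [Fintype.sum_prod_type]
    rfl
  have key := gibbs_pair t (fun z => h0 _) ht1
  have eA : ent (fun a : 𝒳₁ × 𝒳₂ => ∑ b, t (a, b))
      = ent (fun u : 𝒳₁ × 𝒳₂ => ∑ w, q (u.1, u.2, w)) := rfl
  have eB : ent (fun b : 𝒲 => ∑ a : 𝒳₁ × 𝒳₂, t (a, b))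
      = ent (fun w => ∑ x₁, ∑ x₂, q (x₁, x₂, w)) := by
    refine congrArg ent (funext fun w => ?_)
    show ∑ a : 𝒳₁ × 𝒳₂, q (a.1, a.2, w) = ∑ x₁, ∑ x₂, q (x₁, x₂, w)
    rw [Fintype.sum_prod_type]
  have eT : ent t = ent q := by
    unfold ent
    refine congrArg _ ?_
    rw [Fintype.sum_prod_type, Fintype.sum_prod_type]
    simp only [Fintype.sum_prod_type]
    rfl
  rw [eA, eB, eT] at key
  exact key


end Final

/-- If `R_{X₁X₂}(D₁,D₂) = R_{X₁}(D₁) + R_{X₂}(D₂) − I(X₁;X₂)` and `W` satisfies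
the constraint `R_{X₁|W}(D₁) + R_{X₂|W}(D₂) + I(X₁,X₂;W) = R_{X₁X₂}(D₁,D₂)`,
then `I(X₁;X₂|W) = 0` (Markov chain `X₁ − W − X₂`), and hence
`I(X₁,X₂;W) ≥ C(X₁,X₂)`. -/
theorem markov_of_rd_constraint {𝒳₁ 𝒳₂ 𝒴₁ 𝒴₂ : Type}
    [Fintype 𝒳₁] [Fintype 𝒳₂] [Fintype 𝒴₁] [Fintype 𝒴₂]
    (p : 𝒳₁ × 𝒳₂ → ℝ) (hp : IsPMF p)
    (d₁ : 𝒳₁ → 𝒴₁ → ℝ) (d₂ : 𝒳₂ → 𝒴₂ → ℝ) (D₁ D₂ : ℝ)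
    (hRD : RDjoint p d₁ d₂ D₁ D₂
        = RDmarg (fun x₁ => ∑ x₂, p (x₁, x₂)) d₁ D₁
          + RDmarg (fun x₂ => ∑ x₁, p (x₁, x₂)) d₂ D₂ - miPair p)
    (n : ℕ) (q : 𝒳₁ × 𝒳₂ × Fin n → ℝ) (hq : IsPMF q)
    (hmarg : ∀ x₁ x₂, (∑ w, q (x₁, x₂, w)) = p (x₁, x₂))
    (hcon : RDcond (fun u : 𝒳₁ × Fin n => ∑ x₂, q (u.1, x₂, u.2)) d₁ D₁
        + RDcond (fun u : 𝒳₂ × Fin n => ∑ x₁, q (x₁, u.1, u.2)) d₂ D₂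
        + miXXW q = RDjoint p d₁ d₂ D₁ D₂) :
    cmiXXW q = 0 ∧ wynerC p ≤ miXXW q := by
  obtain ⟨hq0, hq1⟩ := hq
  classical
  -- marginal channels
  set pw₁ : 𝒳₁ × Fin n → ℝ := fun u => ∑ x₂, q (u.1, x₂, u.2) with hpw₁
  set pw₂ : 𝒳₂ × Fin n → ℝ := fun u => ∑ x₁, q (x₁, u.1, u.2) with hpw₂
  have hpw₁0 : ∀ u, 0 ≤ pw₁ u := fun u => Finset.sum_nonneg fun _ _ => hq0 _
  have hpw₂0 : ∀ u, 0 ≤ pw₂ u := fun u => Finset.sum_nonneg fun _ _ => hq0 _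
  have hpw₁1 : ∑ u, pw₁ u = 1 := by
    rw [← hq1, Fintype.sum_prod_type, Fintype.sum_prod_type]
    simp only [Fintype.sum_prod_type]
    exact Finset.sum_congr rfl fun x₁ _ => Finset.sum_comm
  have hpw₂1 : ∑ u, pw₂ u = 1 := by
    have h' : ∑ u : 𝒳₂ × Fin n, pw₂ u
        = ∑ x₂ : 𝒳₂, ∑ w : Fin n, ∑ x₁ : 𝒳₁, q (x₁, x₂, w) := by
      rw [Fintype.sum_prod_type]
    rw [h', sum_rot fun x₂ w x₁ => q (x₁, x₂, w), ← hq1, Fintype.sum_prod_type]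
    simp only [Fintype.sum_prod_type]
  -- marginal pmf identifications
  have e₁ : (fun x => ∑ w, pw₁ (x, w)) = (fun x₁ => ∑ x₂, p (x₁, x₂)) := by
    funext x
    show ∑ w, ∑ x₂, q (x, x₂, w) = ∑ x₂, p (x, x₂)
    rw [Finset.sum_comm]
    exact Finset.sum_congr rfl fun x₂ _ => hmarg x x₂
  have e₂ : (fun x => ∑ w, pw₂ (x, w)) = (fun x₂ => ∑ x₁, p (x₁, x₂)) := by
    funext x
    show ∑ w, ∑ x₁, q (x₁, x, w) = ∑ x₁, p (x₁, x)
    rw [Finset.sum_comm]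
    exact Finset.sum_congr rfl fun x₁ _ => hmarg x₁ x
  -- the two conditional RD lower bounds
  have hA₁ := rdcond_ge pw₁ ⟨hpw₁0, hpw₁1⟩ d₁ D₁
  have hA₂ := rdcond_ge pw₂ ⟨hpw₂0, hpw₂1⟩ d₂ D₂
  rw [e₁] at hA₁
  rw [e₂] at hA₂
  -- entropy identifications
  have eW₁ : ent (fun w => ∑ x, pw₁ (x, w))
      = ent (fun w => ∑ x₁, ∑ x₂, q (x₁, x₂, w)) := rfl
  have eW₂ : ent (fun w => ∑ x, pw₂ (x, w))
      = ent (fun w => ∑ x₁, ∑ x₂, q (x₁, x₂, w)) := by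
    refine congrArg ent (funext fun w => ?_)
    show ∑ x₂, ∑ x₁, q (x₁, x₂, w) = ∑ x₁, ∑ x₂, q (x₁, x₂, w)
    exact Finset.sum_comm
  have eXX : ent (fun u : 𝒳₁ × 𝒳₂ => ∑ w, q (u.1, u.2, w)) = ent p := by
    refine congrArg ent (funext fun u => ?_)
    show ∑ w, q (u.1, u.2, w) = p u
    rw [hmarg u.1 u.2]
  -- abbreviations
  set I₁ := ent (fun x₁ => ∑ x₂, p (x₁, x₂)) + ent (fun w => ∑ x, pw₁ (x, w))
      - ent pw₁ with hI₁
  set I₂ := ent (fun x₂ => ∑ x₁, p (x₁, x₂)) + ent (fun w => ∑ x, pw₂ (x, w))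
      - ent pw₂ with hI₂
  -- the chain-rule identity
  have hid : miXXW q = I₁ + I₂ + cmiXXW q - miPair p := by
    rw [hI₁, hI₂, eW₁, eW₂]
    unfold miXXW cmiXXW miPair
    rw [← hpw₁, ← hpw₂, eXX]
    ring
  -- nonnegativity of the conditional mutual information
  have hgibbs := gibbs_main q hq0 hq1
  have hcmi0 : 0 ≤ cmiXXW q := hgibbs.1
  -- combine with the constraint
  have hcmile : cmiXXW q ≤ 0 := by
    rw [hRD] at hcon
    have := hcon
    rw [hid] at this
    linarith
  have hcmi : cmiXXW q = 0 := le_antisymm hcmile hcmi0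
  refine ⟨hcmi, ?_⟩
  -- the factorization from the equality case of Gibbs
  have hfact := hgibbs.2 hcmi
  -- membership in the Wyner set
  have hmem : miXXW q ∈ {r : ℝ | ∃ m : ℕ, ∃ q' : 𝒳₁ × 𝒳₂ × Fin m → ℝ, IsPMF q' ∧
      (∀ x₁ x₂, (∑ w, q' (x₁, x₂, w)) = p (x₁, x₂)) ∧
      (∀ x₁ x₂ w, q' (x₁, x₂, w) * (∑ a, ∑ b, q' (a, b, w))
          = (∑ b, q' (x₁, b, w)) * (∑ a, q' (a, x₂, w))) ∧
      r = miXXW q'} :=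
    ⟨n, q, ⟨hq0, hq1⟩, hmarg, hfact, rfl⟩
  have hbdd : BddBelow {r : ℝ | ∃ m : ℕ, ∃ q' : 𝒳₁ × 𝒳₂ × Fin m → ℝ, IsPMF q' ∧
      (∀ x₁ x₂, (∑ w, q' (x₁, x₂, w)) = p (x₁, x₂)) ∧
      (∀ x₁ x₂ w, q' (x₁, x₂, w) * (∑ a, ∑ b, q' (a, b, w))
          = (∑ b, q' (x₁, b, w)) * (∑ a, q' (a, x₂, w))) ∧
      r = miXXW q'} := by
    refine ⟨0, ?_⟩
    rintro r ⟨m, q', ⟨hq'0, hq'1⟩, -, -, rfl⟩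
    exact miXXW_nonneg q' hq'0 hq'1
  exact csInf_le hbdd hmem
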